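/- Let phi_1: (Z/5Z)^9 -> (Z/5Z)^2 send the i-th standard generator lambda_i to the pairs (1,1),(1,0),(1,1),(3,3),(3,0),(0,1),(0,1),(0,2),(1,1) for i = 1,...,9 respectively. Then the sum of the nine images is (0,0), and for every triple (i,j,k) in T, the two elements phi_1(lambda_i) and phi_1(lambda_i)+phi_1(lambda_j)+phi_1(lambda_k) generate (Z/5Z)^2 (and similarly with lambda_j and lambda_k in place of lambda_i). -/

import Mathlib

def T : Finset (ℕ × ℕ × ℕ) :=
  {(1,2,3), (4,5,6), (7,8,9), (1,4,7), (2,5,8), (3,6,9),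
   (1,5,9), (3,5,7), (1,6,8), (3,4,8), (2,4,9), (2,6,7)}

def phi1 : ℕ → ZMod 5 × ZMod 5
  | 1 => (1,1) | 2 => (1,0) | 3 => (1,1)
  | 4 => (3,3) | 5 => (3,0) | 6 => (0,1)
  | 7 => (0,1) | 8 => (0,2) | 9 => (1,1)
  | _ => (0,0)

lemma span_pair_det (v w : ZMod 5 × ZMod 5) (h : v.1 * w.2 - v.2 * w.1 ≠ 0) :
    Submodule.span (ZMod 5) {v, w} = ⊤ := by
  haveI : Fact (Nat.Prime 5) := ⟨by norm_num⟩
  rw [eq_top_iff]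
  rintro ⟨x, y⟩ -
  have hx : (⟨x, y⟩ : ZMod 5 × ZMod 5) =
      (((x * w.2 - y * w.1) / (v.1 * w.2 - v.2 * w.1) : ZMod 5)) • v +
      (((y * v.1 - x * v.2) / (v.1 * w.2 - v.2 * w.1) : ZMod 5)) • w := by
    apply Prod.ext <;> simp only [Prod.smul_fst, Prod.smul_snd, Prod.fst_add, Prod.snd_add,
      smul_eq_mul] <;>
      rw [div_mul_eq_mul_div, div_mul_eq_mul_div, ← add_div, eq_div_iff h] <;> ring
  rw [hx]
  exact Submodule.add_mem _
    (Submodule.smul_mem _ _ (Submodule.subset_span (by simp)))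
    (Submodule.smul_mem _ _ (Submodule.subset_span (by simp)))

theorem stmt_5 :
    (∑ i ∈ Finset.Icc 1 9, phi1 i = 0) ∧
    ∀ i j k : ℕ, (i, j, k) ∈ T →
      (Submodule.span (ZMod 5) {phi1 i, phi1 i + phi1 j + phi1 k} = ⊤ ∧
       Submodule.span (ZMod 5) {phi1 j, phi1 i + phi1 j + phi1 k} = ⊤ ∧
       Submodule.span (ZMod 5) {phi1 k, phi1 i + phi1 j + phi1 k} = ⊤) := by
  constructor
  · decide
  · intro i j k h
    simp only [T, Finset.mem_insert, Finset.mem_singleton, Prod.mk.injEq] at h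
    rcases h with ⟨hi,hj,hk⟩|⟨hi,hj,hk⟩|⟨hi,hj,hk⟩|⟨hi,hj,hk⟩|⟨hi,hj,hk⟩|⟨hi,hj,hk⟩|⟨hi,hj,hk⟩|⟨hi,hj,hk⟩|⟨hi,hj,hk⟩|⟨hi,hj,hk⟩|⟨hi,hj,hk⟩|⟨hi,hj,hk⟩ <;>
      subst hi <;> subst hj <;> subst hk <;>
      exact ⟨span_pair_det _ _ (by decide), span_pair_det _ _ (by decide), span_pair_det _ _ (by decide)⟩
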